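/- Let L be a finite meet semilattice and k a commutative ring. Then the semigroup algebra kL is isomorphic as a k-algebra to the product ring k^L, via the map sending ℓ ∈ L to the characteristic function of the down-set {m ∈ L : m ≤ ℓ}. -/

import Mathlib

/-- Solomon's theorem: for a finite meet semilattice `L` (a commutative band under `⊓`),
the semigroup algebra `kL` is isomorphic as a `k`-algebra to the product ring `k^L`,
via `ℓ ↦` the characteristic function of `{m | m ≤ ℓ}`. -/
theorem solomon_semilattice_algebra_iso (L : Type*) [SemilatticeInf L] [Fintype L]
    [DecidableRel (α := L) (· ≤ ·)] (k : Type*) [CommRing k] :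
    letI : Mul L := ⟨(· ⊓ ·)⟩
    ∃ e : MonoidAlgebra k L ≃+* (L → k),
      (∀ (c : k) (f : MonoidAlgebra k L), e (c • f) = c • e f) ∧
      (∀ ℓ : L, e (MonoidAlgebra.single ℓ 1) = fun m => if m ≤ ℓ then (1 : k) else 0) := by
  letI : Mul L := ⟨(· ⊓ ·)⟩
  letI : DecidableEq L := fun a b => decidable_of_iff _ le_antisymm_iff.symm
  letI : Fintype (LinearExtension L) := inferInstanceAs (Fintype L)
  -- the zeta matrix
  set M : Matrix L L k := fun m ℓ => if m ≤ ℓ then 1 else 0 with hM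
  -- its determinant is 1 (it is unitriangular w.r.t. a linear extension)
  let e0 : L ≃ LinearExtension L := Equiv.refl L
  have htri : ((Matrix.reindex e0 e0) M).BlockTriangular id := by
    intro i j hij
    simp only [e0, Matrix.reindex_apply, Equiv.refl_symm, Matrix.submatrix_apply,
      Equiv.refl_apply, hM]
    exact if_neg fun hle => not_le.2 hij ((toLinearExtension (α := L)).monotone hle)
  have hdet : M.det = 1 := by
    rw [← Matrix.det_reindex_self e0 M, Matrix.det_of_upperTriangular htri]
    refine Finset.prod_eq_one fun i _ => ?_
    simp only [e0, Matrix.reindex_apply, Equiv.refl_symm, Matrix.submatrix_apply,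
      Equiv.refl_apply, hM]
    exact if_pos le_rfl
  have hinv : Invertible M := M.invertibleOfIsUnitDet (by rw [hdet]; exact isUnit_one)
  -- the linear equivalence
  let E : MonoidAlgebra k L ≃ₗ[k] (L → k) :=
    (MonoidAlgebra.coeffLinearEquiv k).trans ((Finsupp.linearEquivFunOnFinite k k L).trans (M.toLinearEquiv' hinv))
  have hE : ∀ (f : MonoidAlgebra k L), E f = M.mulVec f.coeff := by
    intro f
    have h1 := LinearMap.congr_fun (Matrix.toLinearEquiv'_apply M hinv) (⇑f.coeff)
    rw [Matrix.toLin'_apply] at h1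
    exact h1
  have hpt : ∀ (v : L → k) (m : L), M.mulVec v m = ∑ ℓ, if m ≤ ℓ then v ℓ else 0 := by
    intro v m
    simp [Matrix.mulVec, dotProduct, hM, ite_mul]
  have hsingle : ∀ (ℓ : L) (c : k) (m : L),
      M.mulVec (Finsupp.single ℓ c : L →₀ k) m = if m ≤ ℓ then c else 0 := by
    intro ℓ c m
    rw [hpt]
    rw [Finset.sum_eq_single ℓ]
    · simp
    · intro b _ hb
      simp [Finsupp.single_apply, Ne.symm hb]
    · simp
  -- multiplicativity
  have hmul : ∀ f g : MonoidAlgebra k L, E (f * g) = E f * E g := by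
    intro f g
    funext m
    -- the linear functional v ↦ (M.mulVec v) m
    let H : MonoidAlgebra k L →ₗ[k] k := (LinearMap.proj m).comp E.toLinearMap
    have hH : ∀ v : MonoidAlgebra k L, H v = M.mulVec v.coeff m := fun v => congrFun (hE v) m
    show H (f * g) = E f m * E g m
    rw [MonoidAlgebra.mul_def]
    rw [map_finsuppSum H]
    have : ∀ a ∈ f.coeff.support,
        H (g.coeff.sum fun a₂ b₂ => MonoidAlgebra.single (a * a₂) (f.coeff a * b₂))
          = ∑ b ∈ g.coeff.support, (if m ≤ a then f.coeff a else 0) * (if m ≤ b then g.coeff b else 0) := by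
      intro a _
      rw [map_finsuppSum H, Finsupp.sum]
      refine Finset.sum_congr rfl fun b _ => ?_
      rw [hH, MonoidAlgebra.coeff_single, hsingle]
      have : m ≤ a * b ↔ m ≤ a ∧ m ≤ b := le_inf_iff
      by_cases h1 : m ≤ a <;> by_cases h2 : m ≤ b <;>
        simp [this, h1, h2]
    rw [Finsupp.sum, Finset.sum_congr rfl this, ← Finset.sum_mul_sum]
    have hext : ∀ v : MonoidAlgebra k L,
        ∑ a ∈ v.coeff.support, (if m ≤ a then v.coeff a else 0) = E v m := by
      intro v
      rw [congrFun (hE v) m, hpt]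
      refine Finset.sum_subset (Finset.subset_univ _) fun x _ hx => ?_
      simp [Finsupp.notMem_support_iff.mp hx]
    rw [hext f, hext g]
  refine ⟨{ E.toEquiv with map_add' := map_add E, map_mul' := hmul }, ?_, ?_⟩
  · intro c f
    exact map_smul E c f
  · intro ℓ
    funext m
    exact (congrFun (hE _) m).trans (hsingle ℓ 1 m)
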